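/- Let ζ ∈ S∞ with ζ not the identity, let up(ζ) = {j : ζ⁻¹(j) < j} = {j_1 < j_2 < ··· < j_k}, and define w ∈ S∞ by w(i) = j_i for 1 ≤ i ≤ k and by letting w(k+1), w(k+2), ... run through the complement of up(ζ) in {1,2,3,...} in increasing order. Then ζ⁻¹·w ≤_k w in the k-Bruhat order; in particular the interval [ζ⁻¹w, w]_k is nonempty and ζ = w·(ζ⁻¹w)⁻¹. -/

import Mathlib

/-
Common definitions for "A Monoid for the universal k-Bruhat order"
(Bergeron–Sottile).

`S∞` is modeled as `Equiv.Perm ℕ+`; membership in `S∞` (finite support)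
is the predicate `FinSupp`.
-/

noncomputable section

open scoped Classical

/-- `S∞`: permutations of the positive integers `{1,2,3,...}`. -/
abbrev Sinf : Type := Equiv.Perm ℕ+

/-- A permutation belongs to `S∞` iff it moves only finitely many points. -/
def FinSupp (w : Sinf) : Prop := {i : ℕ+ | w i ≠ i}.Finite

/-- `ℓ(w)`: the number of inversions, i.e. pairs `i < j` with `w i > w j`. -/
def len (w : Sinf) : ℕ := {p : ℕ+ × ℕ+ | p.1 < p.2 ∧ w p.2 < w p.1}.ncard

/-- The cover relation of the `k`-Bruhat order: `w` covers `u` iff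
`ℓ(w) = ℓ(u) + 1` and `w = u·(a b)` for some `a ≤ k < b`. -/
def kCover (k : ℕ+) (u w : Sinf) : Prop :=
  len w = len u + 1 ∧ ∃ a b : ℕ+, a ≤ k ∧ k < b ∧ w = u * Equiv.swap a b

/-- The `k`-Bruhat order `≤ₖ`: the partial order generated by `kCover`. -/
def kBruhat (k : ℕ+) : Sinf → Sinf → Prop := Relation.ReflTransGen (kCover k)

/-- `ℓᵤ(ζ) = ℓ(ζu) − ℓ(u)` for any (some chosen) `u ∈ S∞`, `k` with `u ≤ₖ ζu`. -/
def ellU (ζ : Sinf) : ℕ :=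
  if h : ∃ p : Sinf × ℕ+, FinSupp p.1 ∧ kBruhat p.2 p.1 (ζ * p.1) then
    len (ζ * h.choose.1) - len h.choose.1
  else 0

/-- `ℚ[S∞]` as a `ℚ`-vector space with basis the permutations. -/
abbrev QS : Type := Sinf →₀ ℚ

/-- The operator `û_{αβ}` on `ℚ[S∞]`: on a basis permutation `ζ` it gives
`(α β)·ζ` if `ℓᵤ((α β)ζ) = ℓᵤ(ζ) + 1`, and `0` otherwise. -/
def uhat (α β : ℕ+) : QS →ₗ[ℚ] QS :=
  Finsupp.lsum ℚ (fun ζ : Sinf =>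
    LinearMap.toSpanSingleton ℚ QS
      (if ellU (Equiv.swap α β * ζ) = ellU ζ + 1 then
        Finsupp.single (Equiv.swap α β * ζ) (1 : ℚ)
      else 0))

/-- Index type for the generators `u_{αβ}`, `0 < α < β`. -/
abbrev Gen : Type := {p : ℕ+ × ℕ+ // p.1 < p.2}

/-- For `L = [(α₁,β₁),…,(αₙ,βₙ)]`, the composition `û_{αₙβₙ}∘⋯∘û_{α₁β₁}`
(the operator `û_{α₁β₁}` acts first). -/
def wordOp (L : List Gen) : QS →ₗ[ℚ] QS :=
  L.foldl (fun f p => (uhat p.val.1 p.val.2).comp f) LinearMap.id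

/-- The universal `k`-Bruhat order `≼`. -/
def uBruhat (η ζ : Sinf) : Prop :=
  ∃ u : Sinf, FinSupp u ∧ ∃ k : ℕ+, kBruhat k u (η * u) ∧ kBruhat k (η * u) (ζ * u)

/-- `ζ` covers `η` in `≼`. -/
def uCover (η ζ : Sinf) : Prop :=
  uBruhat η ζ ∧ η ≠ ζ ∧ ∀ ξ : Sinf, uBruhat η ξ → uBruhat ξ ζ → ξ = η ∨ ξ = ζ

/-- `up(ζ) = {j : ζ⁻¹(j) < j}`. -/
def upS (ζ : Sinf) : Set ℕ+ := {j | ζ⁻¹ j < j}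

/-- `dw(ζ) = {j : ζ⁻¹(j) > j}`. -/
def dwS (ζ : Sinf) : Set ℕ+ := {j | j < ζ⁻¹ j}

/-- `R_u(ζ)`: the `u`-reduced sequences for `ζ`, i.e. sequences
`((α₁,β₁),…,(αₙ,βₙ))` with `û_{αₙβₙ}∘⋯∘û_{α₁β₁}(1) = ζ`. -/
def Rset (ζ : Sinf) : Set (List Gen) :=
  {L | wordOp L (Finsupp.single 1 1) = Finsupp.single ζ 1}

/-- `H_p(ζ)`: empty if some `pᵢ < 0`; otherwise those `u`-reduced sequences for `ζ`
whose `α`'s strictly increase within each consecutive block of sizes `p₁,…,p_r`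
(indices `i, i+1` lie in the same block iff `i+1` is not a partial sum of `p`). -/
def Hset (p : List ℤ) (ζ : Sinf) : Set (List Gen) :=
  {L | L ∈ Rset ζ ∧ (∀ x ∈ p, 0 ≤ x) ∧
    ∀ (i : ℕ) (q r : Gen), L[i]? = some q → L[i + 1]? = some r →
      (∀ t : ℕ, (p.take t).sum ≠ (i : ℤ) + 1) → q.val.1 < r.val.1}

/-- `E_p(ζ)`: as `H_p(ζ)` but with the `α`'s strictly decreasing in each block. -/
def Eset (p : List ℤ) (ζ : Sinf) : Set (List Gen) :=
  {L | L ∈ Rset ζ ∧ (∀ x ∈ p, 0 ≤ x) ∧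
    ∀ (i : ℕ) (q r : Gen), L[i]? = some q → L[i + 1]? = some r →
      (∀ t : ℕ, (p.take t).sum ≠ (i : ℤ) + 1) → r.val.1 < q.val.1}

/-- `E'_p(ζ)`: as `H_p(ζ)` but with the `β`'s strictly decreasing in each block. -/
def E'set (p : List ℤ) (ζ : Sinf) : Set (List Gen) :=
  {L | L ∈ Rset ζ ∧ (∀ x ∈ p, 0 ≤ x) ∧
    ∀ (i : ℕ) (q r : Gen), L[i]? = some q → L[i + 1]? = some r →
      (∀ t : ℕ, (p.take t).sum ≠ (i : ℤ) + 1) → r.val.2 < q.val.2}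

/-- The integer sequence `λ_σ = (λ_{σ(i)} + i − σ(i))ᵢ` (here `0`-indexed). -/
def lamSeq (r : ℕ) (lam : Fin r → ℕ) (σ : Equiv.Perm (Fin r)) : List ℤ :=
  (List.finRange r).map (fun i => (lam (σ i) : ℤ) + (i : ℤ) - ((σ i : ℕ) : ℤ))

/-- `c_λ^ζ := Σ_{σ ∈ S_r} ε(σ)·|H_{λ_σ}(ζ)|`. -/
def cCoef (r : ℕ) (lam : Fin r → ℕ) (ζ : Sinf) : ℤ :=
  ∑ σ : Equiv.Perm (Fin r),
    ((Equiv.Perm.sign σ : ℤˣ) : ℤ) * ((Hset (lamSeq r lam σ) ζ).ncard : ℤ)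

/-- The free monoid-with-zero on the generators `u_{αβ}`. -/
abbrev FM : Type := WithZero (FreeMonoid Gen)

/-- The generator `u_{αβ}` as an element of `FM`. -/
def g (α β : ℕ+) (h : α < β) : FM :=
  ((FreeMonoid.of (⟨(α, β), h⟩ : Gen) : FreeMonoid Gen) : FM)

/-- The defining relations (1)–(5) of the monoid `M`. -/
inductive MRel : FM → FM → Prop
  | r1 (α β γ δ : ℕ+) (h1 : α < β) (h2 : β < γ) (h3 : γ < δ) :
      MRel (g β γ h2 * g γ δ h3 * g α γ (h1.trans h2))
           (g β δ (h2.trans h3) * g α β h1 * g β γ h2)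
  | r2 (α β γ δ : ℕ+) (h1 : α < β) (h2 : β < γ) (h3 : γ < δ) :
      MRel (g α γ (h1.trans h2) * g γ δ h3 * g β γ h2)
           (g β γ h2 * g α β h1 * g β δ (h2.trans h3))
  | r3a (α β γ δ : ℕ+) (h1 : α < β) (h2 : γ < δ) (h : β < γ) :
      MRel (g α β h1 * g γ δ h2) (g γ δ h2 * g α β h1)
  | r3b (α β γ δ : ℕ+) (h1 : α < β) (h2 : γ < δ) (h3 : α < γ) (h4 : δ < β) :
      MRel (g α β h1 * g γ δ h2) (g γ δ h2 * g α β h1)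
  | r4a (α β γ δ : ℕ+) (h1 : α ≤ β) (h2 : β < γ) (h3 : γ ≤ δ) :
      MRel (g α γ (h1.trans_lt h2) * g β δ (h2.trans_le h3)) 0
  | r4b (α β γ δ : ℕ+) (h1 : α ≤ β) (h2 : β < γ) (h3 : γ ≤ δ) :
      MRel (g β δ (h2.trans_le h3) * g α γ (h1.trans_lt h2)) 0
  | r5a (α β γ : ℕ+) (h1 : α < β) (h2 : β < γ) :
      MRel (g β γ h2 * g α β h1 * g β γ h2) 0
  | r5b (α β γ : ℕ+) (h1 : α < β) (h2 : β < γ) :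
      MRel (g α β h1 * g β γ h2 * g α β h1) 0

/-- The congruence generated by the relations (1)–(5); the monoid `M` is its
quotient `MCon.Quotient`. -/
def MCon : Con FM := conGen MRel

/-- The word `u_{αₙβₙ}⋯u_{α₁β₁} ∈ FM` for `L = [(α₁,β₁),…,(αₙ,βₙ)]`. -/
def wordFM (L : List Gen) : FM :=
  ((FreeMonoid.ofList L.reverse : FreeMonoid Gen) : FM)

/-- The generator `u_{αβ}` in the free monoid (no zero). -/
def g3 (α β : ℕ+) (h : α < β) : FreeMonoid Gen := FreeMonoid.of ⟨(α, β), h⟩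

/-- The relations (1)–(3) only, on the free monoid (no zero). -/
inductive MRel3 : FreeMonoid Gen → FreeMonoid Gen → Prop
  | r1 (α β γ δ : ℕ+) (h1 : α < β) (h2 : β < γ) (h3 : γ < δ) :
      MRel3 (g3 β γ h2 * g3 γ δ h3 * g3 α γ (h1.trans h2))
            (g3 β δ (h2.trans h3) * g3 α β h1 * g3 β γ h2)
  | r2 (α β γ δ : ℕ+) (h1 : α < β) (h2 : β < γ) (h3 : γ < δ) :
      MRel3 (g3 α γ (h1.trans h2) * g3 γ δ h3 * g3 β γ h2)
            (g3 β γ h2 * g3 α β h1 * g3 β δ (h2.trans h3))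
  | r3a (α β γ δ : ℕ+) (h1 : α < β) (h2 : γ < δ) (h : β < γ) :
      MRel3 (g3 α β h1 * g3 γ δ h2) (g3 γ δ h2 * g3 α β h1)
  | r3b (α β γ δ : ℕ+) (h1 : α < β) (h2 : γ < δ) (h3 : α < γ) (h4 : δ < β) :
      MRel3 (g3 α β h1 * g3 γ δ h2) (g3 γ δ h2 * g3 α β h1)

/-- The word (with letters `(αᵢ,βᵢ)`) encoding a maximal chain of `[u,w]ₖ`:
there are permutations `u = u₀ <ₖ u₁ <ₖ ⋯ <ₖ uₙ = w` (each step a `k`-Bruhat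
cover) with `uᵢ₊₁ = (αᵢ₊₁ βᵢ₊₁)·uᵢ`. -/
def IsChainWord (k : ℕ+) (u w : Sinf) (L : List Gen) : Prop :=
  ∃ c : ℕ → Sinf, c 0 = u ∧ c L.length = w ∧
    ∀ (i : ℕ) (q : Gen), L[i]? = some q →
      kCover k (c i) (c (i + 1)) ∧ c (i + 1) = Equiv.swap q.val.1 q.val.2 * c i

/-- For an order-preserving `f`, the induced map on generators
`(α,β) ↦ (f α, f β)`. -/
def genMap (f : ℕ+ → ℕ+) (p : Gen) : Gen :=
  if h : f p.val.1 < f p.val.2 then ⟨(f p.val.1, f p.val.2), h⟩ else p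

/-- For an order-reversing `f`, the induced map on generators
`(α,β) ↦ (f β, f α)`. -/
def vmapGen (f : ℕ+ → ℕ+) (p : Gen) : Gen :=
  if h : f p.val.2 < f p.val.1 then ⟨(f p.val.2, f p.val.1), h⟩ else p

/-- The map `φ_a : {1,2,…} → {1,2,…}`, `i ↦ i` for `i < a` and `i ↦ i+1` for `i ≥ a`. -/
def phiF (a : ℕ+) (i : ℕ+) : ℕ+ := if i < a then i else i + 1

end
noncomputable section IzetaProof
open scoped Classical

private def InvSet (u : Sinf) : Set (ℕ+ × ℕ+) := {p | p.1 < p.2 ∧ u p.2 < u p.1}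

private lemma len_def (u : Sinf) : len u = (InvSet u).ncard := rfl

private lemma invSet_finite {u : Sinf} (hu : FinSupp u) : (InvSet u).Finite := by
  set B : ℕ+ := hu.toFinset.sup id with hB
  have hbd : ∀ i : ℕ+, u i ≠ i → i ≤ B := by
    intro i hi
    exact Finset.le_sup (f := id) ((Set.Finite.mem_toFinset hu).mpr hi)
  have hsub : InvSet u ⊆ Set.Iic B ×ˢ Set.Iic B := by
    rintro ⟨i, j⟩ ⟨hij, hinv⟩
    have hjB : j ≤ B := by
      by_contra hj
      push_neg at hj
      have hujj : u j = j := by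
        by_contra hc
        exact absurd (hbd j hc) (not_le.mpr hj)
      have hui : u i ≠ i := by
        intro hc
        rw [hujj, hc] at hinv
        exact absurd hij (not_lt.mpr hinv.le)
      have h2 : u (u i) ≠ u i := fun hc => hui (u.injective hc)
      have h3 : u i ≤ B := hbd _ h2
      rw [hujj] at hinv
      exact absurd hinv (not_lt.mpr (h3.trans hj.le))
    exact ⟨hij.le.trans hjB, hjB⟩
  exact Set.Finite.subset (Set.Finite.prod (Set.finite_Iic B) (Set.finite_Iic B)) hsub

private lemma finSupp_inv {f : Sinf} (hf : FinSupp f) : FinSupp f⁻¹ := by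
  apply Set.Finite.subset hf
  intro i hi
  show f i ≠ i
  intro hc
  apply hi
  show f⁻¹ i = i
  conv_lhs => rw [← hc]
  exact Equiv.symm_apply_apply f i

private lemma finSupp_mul {f g : Sinf} (hf : FinSupp f) (hg : FinSupp g) :
    FinSupp (f * g) := by
  apply Set.Finite.subset ((hf.preimage (g.injective.injOn)).union hg)
  intro i hi
  by_cases hgi : g i = i
  · left
    show f (g i) ≠ g i
    rw [hgi]
    simpa [hgi] using hi
  · right; exact hgi

private lemma finSupp_swap (a b : ℕ+) : FinSupp (Equiv.swap a b) := by
  apply Set.Finite.subset ((Set.finite_singleton a).union (Set.finite_singleton b))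
  intro i hi
  by_contra hc
  simp only [Set.mem_union, Set.mem_singleton_iff, not_or] at hc
  exact hi (Equiv.swap_apply_of_ne_of_ne hc.1 hc.2)

private lemma len_step (u : Sinf) (hu : FinSupp u) (a b : ℕ+) (hab : a < b)
    (h1 : u a < u b) (h2 : ∀ c : ℕ+, a < c → c < b → u c < u a ∨ u b < u c) :
    len (u * Equiv.swap a b) = len u + 1 := by
  set s := Equiv.swap a b with hs
  have hsa : s a = b := Equiv.swap_apply_left a b
  have hsb : s b = a := Equiv.swap_apply_right a b
  have hsc : ∀ c : ℕ+, c ≠ a → c ≠ b → s c = c :=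
    fun c h h' => Equiv.swap_apply_of_ne_of_ne h h'
  have hss : ∀ x, s (s x) = x := fun x => Equiv.swap_apply_self a b x
  set σ : ℕ+ × ℕ+ → ℕ+ × ℕ+ := fun p =>
    if b < p.2 ∧ (p.1 = a ∨ p.1 = b) then (s p.1, p.2)
    else if p.1 < a ∧ (p.2 = a ∨ p.2 = b) then (p.1, s p.2)
    else p with hσ
  have hσ1 : ∀ i j : ℕ+, b < j → (i = a ∨ i = b) → σ (i, j) = (s i, j) := by
    intro i j h h'; simp only [hσ]; rw [if_pos ⟨h, h'⟩]
  have hσ2 : ∀ i j : ℕ+, ¬(b < j ∧ (i = a ∨ i = b)) → i < a → (j = a ∨ j = b) →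
      σ (i, j) = (i, s j) := by
    intro i j h h' h''; simp only [hσ]; rw [if_neg h, if_pos ⟨h', h''⟩]
  have hσ3 : ∀ i j : ℕ+, ¬(b < j ∧ (i = a ∨ i = b)) → ¬(i < a ∧ (j = a ∨ j = b)) →
      σ (i, j) = (i, j) := by
    intro i j h h'; simp only [hσ]; rw [if_neg h, if_neg h']
  -- involution
  have hinvol : Function.Involutive σ := by
    rintro ⟨i, j⟩
    by_cases c1 : b < j ∧ (i = a ∨ i = b)
    · rw [hσ1 _ _ c1.1 c1.2]
      have hsi : s i = a ∨ s i = b := by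
        rcases c1.2 with h | h <;> simp [h, hsa, hsb]
      rw [hσ1 _ _ c1.1 hsi, hss]
    · by_cases c2 : i < a ∧ (j = a ∨ j = b)
      · rw [hσ2 _ _ c1 c2.1 c2.2]
        have hnc1 : ¬(b < s j ∧ (i = a ∨ i = b)) := by
          rintro ⟨hb, -⟩
          rcases c2.2 with h | h
          · rw [h, hsa] at hb; exact lt_irrefl b hb
          · rw [h, hsb] at hb; exact lt_asymm hab hb
        rw [hσ2 _ _ hnc1 c2.1 (by rcases c2.2 with h | h <;> simp [h, hsa, hsb]), hss]
      · rw [hσ3 _ _ c1 c2, hσ3 _ _ c1 c2]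
  -- (A)
  have hA : ∀ p ∈ InvSet u, σ p ∈ InvSet (u * s) ∧ σ p ≠ (a, b) := by
    rintro ⟨i, j⟩ ⟨hij, hinv⟩
    by_cases c1 : b < j ∧ (i = a ∨ i = b)
    · rw [hσ1 _ _ c1.1 c1.2]
      have hja : j ≠ a := fun h => lt_asymm hab (h ▸ c1.1)
      have hjb : j ≠ b := fun h => lt_irrefl b (h ▸ c1.1)
      have hsj : s j = j := hsc j hja hjb
      have hsi_le : s i ≤ b := by
        rcases c1.2 with h | h <;> simp [h, hsa, hsb, hab.le]
      refine ⟨⟨lt_of_le_of_lt hsi_le c1.1, ?_⟩, ?_⟩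
      · show u (s j) < u (s (s i))
        rw [hsj, hss]
        exact hinv
      · intro h
        exact hjb (congrArg Prod.snd h)
    · by_cases c2 : i < a ∧ (j = a ∨ j = b)
      · rw [hσ2 _ _ c1 c2.1 c2.2]
        have hia : i ≠ a := ne_of_lt c2.1
        have hib : i ≠ b := ne_of_lt (c2.1.trans hab)
        have hsi : s i = i := hsc i hia hib
        have has : a ≤ s j := by
          rcases c2.2 with h | h
          · rw [h, hsa]; exact hab.le
          · rw [h, hsb]
        refine ⟨⟨lt_of_lt_of_le c2.1 has, ?_⟩, ?_⟩
        · show u (s (s j)) < u (s i)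
          rw [hss, hsi]
          exact hinv
        · intro h
          exact hia (congrArg Prod.fst h)
      · rw [hσ3 _ _ c1 c2]
        by_cases hia : i = a
        · rw [hia] at hij hinv ⊢
          have hjb : j ≠ b := by
            intro h; rw [h] at hinv
            exact absurd h1 (not_lt.mpr hinv.le)
          have hjle : j ≤ b := by
            by_contra hc
            exact c1 ⟨not_le.mp hc, Or.inl hia⟩
          have hja : j ≠ a := ne_of_gt hij
          have hsj : s j = j := hsc j hja hjb
          refine ⟨⟨hij, ?_⟩, ?_⟩
          · show u (s j) < u (s a)
            rw [hsj, hsa]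
            exact hinv.trans h1
          · intro h
            exact hjb (congrArg Prod.snd h)
        · by_cases hib : i = b
          · exfalso
            exact c1 ⟨hib ▸ hij, Or.inr hib⟩
          · have hsi : s i = i := hsc i hia hib
            by_cases hja : j = a
            · exfalso
              exact c2 ⟨hja ▸ hij, Or.inl hja⟩
            · by_cases hjb : j = b
              · rw [hjb] at hij hinv ⊢
                have haii : a < i := by
                  rcases lt_trichotomy i a with h | h | h
                  · exact absurd ⟨h, Or.inr hjb⟩ c2
                  · exact absurd h hia
                  · exact h
                refine ⟨⟨hij, ?_⟩, ?_⟩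
                · show u (s b) < u (s i)
                  rw [hsb, hsi]
                  exact h1.trans hinv
                · intro h
                  exact hia (congrArg Prod.fst h)
              · have hsj : s j = j := hsc j hja hjb
                refine ⟨⟨hij, ?_⟩, ?_⟩
                · show u (s j) < u (s i)
                  rw [hsj, hsi]
                  exact hinv
                · intro h
                  exact hia (congrArg Prod.fst h)
  -- (B)
  have hB : ∀ p ∈ InvSet (u * s), p ≠ (a, b) → σ p ∈ InvSet u := by
    rintro ⟨i, j⟩ ⟨hij, hinv⟩ hne
    have hinv' : u (s j) < u (s i) := hinv
    by_cases c1 : b < j ∧ (i = a ∨ i = b)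
    · rw [hσ1 _ _ c1.1 c1.2]
      have hja : j ≠ a := fun h => lt_asymm hab (h ▸ c1.1)
      have hjb : j ≠ b := fun h => lt_irrefl b (h ▸ c1.1)
      have hsj : s j = j := hsc j hja hjb
      have hsi_le : s i ≤ b := by
        rcases c1.2 with h | h <;> simp [h, hsa, hsb, hab.le]
      refine ⟨lt_of_le_of_lt hsi_le c1.1, ?_⟩
      rw [hsj] at hinv'
      exact hinv'
    · by_cases c2 : i < a ∧ (j = a ∨ j = b)
      · rw [hσ2 _ _ c1 c2.1 c2.2]
        have hia : i ≠ a := ne_of_lt c2.1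
        have hib : i ≠ b := ne_of_lt (c2.1.trans hab)
        have hsi : s i = i := hsc i hia hib
        have has : a ≤ s j := by
          rcases c2.2 with h | h
          · rw [h, hsa]; exact hab.le
          · rw [h, hsb]
        refine ⟨lt_of_lt_of_le c2.1 has, ?_⟩
        rw [hsi] at hinv'
        exact hinv'
      · rw [hσ3 _ _ c1 c2]
        by_cases hia : i = a
        · rw [hia] at hij hinv' ⊢
          have hjb : j ≠ b := fun h => hne (by rw [hia, h])
          have hjle : j ≤ b := by
            by_contra hc
            exact c1 ⟨not_le.mp hc, Or.inl hia⟩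
          have hja : j ≠ a := ne_of_gt hij
          have hjltb : j < b := lt_of_le_of_ne hjle hjb
          have hsj : s j = j := hsc j hja hjb
          rw [hsj, hsa] at hinv'
          rcases h2 j hij hjltb with h | h
          · exact ⟨hij, h⟩
          · exact absurd hinv' (not_lt.mpr h.le)
        · by_cases hib : i = b
          · exfalso
            exact c1 ⟨hib ▸ hij, Or.inr hib⟩
          · have hsi : s i = i := hsc i hia hib
            by_cases hja : j = a
            · exfalso
              exact c2 ⟨hja ▸ hij, Or.inl hja⟩
            · by_cases hjb : j = b
              · rw [hjb] at hij hinv' ⊢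
                have haii : a < i := by
                  rcases lt_trichotomy i a with h | h | h
                  · exact absurd ⟨h, Or.inr hjb⟩ c2
                  · exact absurd h hia
                  · exact h
                rw [hsb, hsi] at hinv'
                rcases h2 i haii hij with h | h
                · exact absurd hinv' (not_lt.mpr h.le)
                · exact ⟨hij, h⟩
              · have hsj : s j = j := hsc j hja hjb
                rw [hsj, hsi] at hinv'
                exact ⟨hij, hinv'⟩
  have hC : (a, b) ∈ InvSet (u * s) := by
    refine ⟨hab, ?_⟩
    show u (s b) < u (s a)
    rw [hsa, hsb]
    exact h1
  have hset : InvSet (u * s) = insert (a, b) (σ '' InvSet u) := by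
    apply Set.eq_of_subset_of_subset
    · intro p hp
      by_cases hpe : p = (a, b)
      · exact hpe ▸ Set.mem_insert _ _
      · exact Set.mem_insert_of_mem _ ⟨σ p, hB p hp hpe, hinvol p⟩
    · rintro p (rfl | ⟨q, hq, rfl⟩)
      · exact hC
      · exact (hA q hq).1
  have hfin : (InvSet u).Finite := invSet_finite hu
  have hnot : (a, b) ∉ σ '' InvSet u := by
    rintro ⟨q, hq, hqe⟩
    exact (hA q hq).2 hqe
  calc len (u * s) = (insert (a, b) (σ '' InvSet u)).ncard := by rw [len_def, hset]
    _ = (σ '' InvSet u).ncard + 1 := Set.ncard_insert_of_notMem hnot (hfin.image σ)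
    _ = (InvSet u).ncard + 1 := by rw [Set.ncard_image_of_injective _ hinvol.injective]
    _ = len u + 1 := rfl

private lemma eq_of_agree (k : ℕ+) (w : Sinf)
    (hw2 : ∀ i j : ℕ+, k < i → i < j → w i < w j) (u : Sinf)
    (h2 : ∀ i : ℕ+, k < i → w i ≤ u i) (heq : ∀ i : ℕ+, i ≤ k → u i = w i) :
    u = w := by
  have key : ∀ n : ℕ, ∀ j : ℕ+, (j : ℕ) ≤ n → u j = w j := by
    intro n
    induction n with
    | zero =>
      intro j hj
      exact absurd hj (by have := j.pos; omega)
    | succ n IH =>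
      intro j hj
      by_cases hjk : j ≤ k
      · exact heq j hjk
      · push_neg at hjk
        by_contra hne
        set c := u⁻¹ (w j) with hcdef
        have hc : u c = w j := Equiv.apply_symm_apply u (w j)
        have hcj : c ≠ j := by
          intro h
          rw [h] at hc
          exact hne hc
        rcases lt_or_gt_of_ne hcj with h | h
        · have hIH : u c = w c := by
            apply IH
            have h1 : (c : ℕ) < (j : ℕ) := h
            omega
          rw [hIH] at hc
          exact hcj (w.injective hc)
        · have hkc : k < c := hjk.trans h
          have h2c : w c ≤ u c := h2 c hkc
          rw [hc] at h2c
          have := hw2 j c hjk h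
          exact absurd h2c (not_le.mpr this)
  exact Equiv.ext (fun j => key (j : ℕ) j le_rfl)

private lemma chain_lemma (k : ℕ+) (w : Sinf)
    (hw1 : ∀ i j : ℕ+, i < j → j ≤ k → w i < w j)
    (hw2 : ∀ i j : ℕ+, k < i → i < j → w i < w j) :
    ∀ (n : ℕ) (u : Sinf), FinSupp u → (∀ i : ℕ+, i ≤ k → u i ≤ w i) →
      (∀ i : ℕ+, k < i → w i ≤ u i) →
      (∑ i ∈ Finset.Icc (1:ℕ+) k, ((w i : ℕ) - (u i : ℕ))) ≤ n →
      kBruhat k u w := by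
  intro n
  induction n with
  | zero =>
    intro u hu h1 h2 hm
    have hsum := Nat.le_zero.mp hm
    have heq : ∀ i : ℕ+, i ≤ k → u i = w i := by
      intro i hik
      have h := (Finset.sum_eq_zero_iff).mp hsum i
        (Finset.mem_Icc.mpr ⟨i.one_le, hik⟩)
      have h1i : (u i : ℕ) ≤ (w i : ℕ) := (PNat.coe_le_coe _ _).mpr (h1 i hik)
      have : (u i : ℕ) = (w i : ℕ) := by omega
      exact PNat.coe_injective this
    rw [eq_of_agree k w hw2 u h2 heq]
    exact Relation.ReflTransGen.refl
  | succ n ih =>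
    intro u hu h1 h2 hm
    by_cases hA : ∃ i : ℕ+, i ≤ k ∧ u i < w i
    · obtain ⟨a0, ha0⟩ := hA
      set A : Finset ℕ+ := (Finset.Icc 1 k).filter (fun i => u i < w i) with hAdef
      have hAne : A.Nonempty :=
        ⟨a0, Finset.mem_filter.mpr ⟨Finset.mem_Icc.mpr ⟨a0.one_le, ha0.1⟩, ha0.2⟩⟩
      obtain ⟨a, haA, hmax⟩ := A.exists_max_image (fun i => u i) hAne
      have hak : a ≤ k := (Finset.mem_Icc.mp (Finset.mem_filter.mp haA).1).2
      have hua : u a < w a := (Finset.mem_filter.mp haA).2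
      have hmax' : ∀ i : ℕ+, i ≤ k → u i < w i → u i ≤ u a := fun i hik hi =>
        hmax i (Finset.mem_filter.mpr ⟨Finset.mem_Icc.mpr ⟨i.one_le, hik⟩, hi⟩)
      set V : Finset ℕ+ := Finset.Ioc (u a) (w a) with hVdef
      set P : Finset ℕ+ := V.image ⇑u⁻¹ with hPdef
      have hmemP : ∀ c : ℕ+, c ∈ P ↔ u a < u c ∧ u c ≤ w a := by
        intro c
        constructor
        · intro hc
          obtain ⟨v, hv, hvc⟩ := Finset.mem_image.mp hc
          have huc : u c = v := by rw [← hvc]; exact Equiv.apply_symm_apply u v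
          rw [huc]
          exact Finset.mem_Ioc.mp hv
        · intro h
          exact Finset.mem_image.mpr ⟨u c, Finset.mem_Ioc.mpr h, Equiv.symm_apply_apply u c⟩
      have claim1 : ∀ c : ℕ+, c ≤ k → u a < u c → u c = w c := by
        intro c hck hlt
        rcases (h1 c hck).lt_or_eq with h | h
        · exact absurd (hmax' c hck h) (not_le.mpr hlt)
        · exact h
      have hbex : ∃ c : ℕ+, (u a < u c ∧ u c ≤ w a) ∧ k < c ∧ w c ≤ u a := by
        by_contra hB
        push_neg at hB
        have himg : P.image ⇑w ⊆ V := by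
          intro v hv
          obtain ⟨c, hcP, rfl⟩ := Finset.mem_image.mp hv
          have hc := (hmemP c).mp hcP
          by_cases hck : c ≤ k
          · rw [← claim1 c hck hc.1]
            exact Finset.mem_Ioc.mpr hc
          · push_neg at hck
            have h2c : w c ≤ u c := h2 c hck
            exact Finset.mem_Ioc.mpr ⟨hB c hc hck, h2c.trans hc.2⟩
        have hPcard : P.card = V.card := Finset.card_image_of_injective _ (Equiv.injective _)
        have hcard : V.card ≤ (P.image ⇑w).card := by
          rw [Finset.card_image_of_injective _ w.injective, hPcard]
        have heqVP := Finset.eq_of_subset_of_card_le himg hcard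
        have hwa : w a ∈ V := Finset.mem_Ioc.mpr ⟨hua, le_refl _⟩
        rw [← heqVP] at hwa
        obtain ⟨c, hcP, hcw⟩ := Finset.mem_image.mp hwa
        have hca : c = a := w.injective hcw
        rw [hca] at hcP
        exact lt_irrefl _ ((hmemP a).mp hcP).1
      set Bs : Finset ℕ+ := P.filter (fun c => k < c ∧ w c ≤ u a) with hBsdef
      have hBsne : Bs.Nonempty := by
        obtain ⟨c, hc1, hc2, hc3⟩ := hbex
        exact ⟨c, Finset.mem_filter.mpr ⟨(hmemP c).mpr hc1, hc2, hc3⟩⟩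
      obtain ⟨b, hbBs, hbmin⟩ := Bs.exists_min_image (fun c => u c) hBsne
      have hbP := (Finset.mem_filter.mp hbBs).1
      have hb1 : u a < u b := ((hmemP b).mp hbP).1
      have hb2 : u b ≤ w a := ((hmemP b).mp hbP).2
      have hbk : k < b := (Finset.mem_filter.mp hbBs).2.1
      have hbw : w b ≤ u a := (Finset.mem_filter.mp hbBs).2.2
      have hab : a < b := lt_of_le_of_lt hak hbk
      have hmid : ∀ c : ℕ+, a < c → c < b → u c < u a ∨ u b < u c := by
        intro c hac hcb
        by_contra hcon
        push_neg at hcon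
        have hca : c ≠ a := ne_of_gt hac
        have hcb' : c ≠ b := ne_of_lt hcb
        have hlt1 : u a < u c :=
          lt_of_le_of_ne hcon.1 (fun h => hca (u.injective h.symm))
        have hlt2 : u c < u b :=
          lt_of_le_of_ne hcon.2 (fun h => hcb' (u.injective h))
        by_cases hck : c ≤ k
        · have hcw := claim1 c hck hlt1
          have hwc : w a < w c := hw1 a c hac hck
          rw [← hcw] at hwc
          exact absurd (hlt2.trans_le hb2) (not_lt.mpr hwc.le)
        · push_neg at hck
          have hwc : w c < w b := hw2 c b hck hcb
          have hcB : c ∈ Bs := Finset.mem_filter.mpr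
            ⟨(hmemP c).mpr ⟨hlt1, hlt2.le.trans hb2⟩, hck, hwc.le.trans hbw⟩
          exact absurd hlt2 (not_lt.mpr (hbmin c hcB))
      have hlen := len_step u hu a b hab hb1 hmid
      have hcov : kCover k u (u * Equiv.swap a b) := ⟨hlen, a, b, hak, hbk, rfl⟩
      have hu' : FinSupp (u * Equiv.swap a b) := finSupp_mul hu (finSupp_swap a b)
      have hva : (u * Equiv.swap a b) a = u b := by
        show u (Equiv.swap a b a) = u b
        rw [Equiv.swap_apply_left]
      have hvb : (u * Equiv.swap a b) b = u a := by
        show u (Equiv.swap a b b) = u a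
        rw [Equiv.swap_apply_right]
      have hval : ∀ i : ℕ+, i ≠ a → i ≠ b → (u * Equiv.swap a b) i = u i := by
        intro i h h'
        show u (Equiv.swap a b i) = u i
        rw [Equiv.swap_apply_of_ne_of_ne h h']
      have h1' : ∀ i : ℕ+, i ≤ k → (u * Equiv.swap a b) i ≤ w i := by
        intro i hik
        by_cases hia : i = a
        · subst hia; rw [hva]; exact hb2
        · have hib : i ≠ b := ne_of_lt (lt_of_le_of_lt hik hbk)
          rw [hval i hia hib]; exact h1 i hik
      have h2' : ∀ i : ℕ+, k < i → w i ≤ (u * Equiv.swap a b) i := by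
        intro i hik
        by_cases hib : i = b
        · subst hib; rw [hvb]; exact hbw
        · have hia : i ≠ a := ne_of_gt (lt_of_le_of_lt hak hik)
          rw [hval i hia hib]; exact h2 i hik
      have hmdec : (∑ i ∈ Finset.Icc (1:ℕ+) k, ((w i : ℕ) - ((u * Equiv.swap a b) i : ℕ)))
          < ∑ i ∈ Finset.Icc (1:ℕ+) k, ((w i : ℕ) - (u i : ℕ)) := by
        apply Finset.sum_lt_sum
        · intro i hi
          by_cases hia : i = a
          · subst hia
            rw [hva]
            exact Nat.sub_le_sub_left ((PNat.coe_le_coe _ _).mpr hb1.le) _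
          · have hib : i ≠ b :=
              ne_of_lt (lt_of_le_of_lt (Finset.mem_Icc.mp hi).2 hbk)
            rw [hval i hia hib]
        · refine ⟨a, Finset.mem_Icc.mpr ⟨a.one_le, hak⟩, ?_⟩
          rw [hva]
          have c1 : (u a : ℕ) < (u b : ℕ) := (PNat.coe_lt_coe _ _).mpr hb1
          have c2 : (u b : ℕ) ≤ (w a : ℕ) := (PNat.coe_le_coe _ _).mpr hb2
          omega
      have hmle : (∑ i ∈ Finset.Icc (1:ℕ+) k, ((w i : ℕ) - ((u * Equiv.swap a b) i : ℕ))) ≤ n :=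
        Nat.lt_succ_iff.mp (lt_of_lt_of_le hmdec hm)
      exact Relation.ReflTransGen.head hcov (ih (u * Equiv.swap a b) hu' h1' h2' hmle)
    · push_neg at hA
      have heq : ∀ i : ℕ+, i ≤ k → u i = w i := fun i h =>
        le_antisymm (h1 i h) (hA i h)
      rw [eq_of_agree k w hw2 u h2 heq]
      exact Relation.ReflTransGen.refl

private lemma w_finSupp (ζ : Sinf) (hζ : FinSupp ζ) (k : ℕ+) (w : Sinf)
    (hw2 : ∀ i j : ℕ+, k < i → i < j → w i < w j)
    (hw3 : ∀ i : ℕ+, i ≤ k → ζ⁻¹ (w i) < w i) :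
    FinSupp w := by
  set N : ℕ+ := k ⊔ hζ.toFinset.sup id with hN
  have hbd : ∀ i : ℕ+, ζ i ≠ i → i ≤ N := fun i hi =>
    le_sup_of_le_right (Finset.le_sup (f := id) ((Set.Finite.mem_toFinset hζ).mpr hi))
  have hup : ∀ p : ℕ+, p ≤ k → w p ≤ N := by
    intro p hp
    have h3 := hw3 p hp
    have hz : ζ (w p) ≠ w p := by
      intro hc
      have h4 : ζ⁻¹ (w p) = w p := by
        conv_lhs => rw [← hc]
        exact Equiv.symm_apply_apply ζ (w p)
      rw [h4] at h3
      exact lt_irrefl _ h3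
    exact hbd _ hz
  have step1 : ∀ m : ℕ+, N ≤ m → ∀ p : ℕ+, p ≤ m → w p ≤ m := by
    intro m hm p hpm
    by_cases hpk : p ≤ k
    · exact (hup p hpk).trans hm
    · push_neg at hpk
      by_contra hc
      push_neg at hc
      have hqlt : ∀ q : ℕ+, w q ≤ m → q < p := by
        intro q hq
        rcases lt_trichotomy q p with h | h | h
        · exact h
        · subst h; exact absurd hq (not_le.mpr hc)
        · have := hw2 p q hpk h
          exact absurd hq (not_le.mpr (hc.trans this))
      have hmaps : ∀ v ∈ Finset.Icc (1:ℕ+) m, w⁻¹ v ∈ (Finset.Icc (1:ℕ+) p).erase p := by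
        intro v hv
        have hvm : v ≤ m := (Finset.mem_Icc.mp hv).2
        have happ : w (w⁻¹ v) = v := Equiv.apply_symm_apply w v
        have hlt : w⁻¹ v < p := hqlt _ (by rw [happ]; exact hvm)
        exact Finset.mem_erase.mpr ⟨ne_of_lt hlt, Finset.mem_Icc.mpr ⟨(w⁻¹ v).one_le, hlt.le⟩⟩
      have hcardle := Finset.card_le_card_of_injOn (f := ⇑w⁻¹) hmaps ((Equiv.injective _).injOn)
      rw [Finset.card_erase_of_mem (Finset.mem_Icc.mpr ⟨p.one_le, le_refl _⟩)] at hcardle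
      rw [PNat.card_Icc, PNat.card_Icc] at hcardle
      have hpm' : (p : ℕ) ≤ (m : ℕ) := (PNat.coe_le_coe _ _).mpr hpm
      have hp1 : 1 ≤ (p : ℕ) := p.one_le
      have hm1 : 1 ≤ (m : ℕ) := m.one_le
      simp only [PNat.one_coe] at hcardle
      omega
  have himage : ∀ m : ℕ+, N ≤ m → (Finset.Icc (1:ℕ+) m).image ⇑w = Finset.Icc 1 m := by
    intro m hm
    apply Finset.eq_of_subset_of_card_le
    · intro v hv
      obtain ⟨p, hp, rfl⟩ := Finset.mem_image.mp hv
      exact Finset.mem_Icc.mpr ⟨(w p).one_le, step1 m hm p (Finset.mem_Icc.mp hp).2⟩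
    · rw [Finset.card_image_of_injective _ w.injective]
  apply Set.Finite.subset (Set.finite_Iic N)
  intro i hi
  by_contra hiN
  simp only [Set.mem_Iic] at hiN
  push_neg at hiN
  have hwi_le : w i ≤ i := step1 i hiN.le i (le_refl i)
  have hqex : ∃ q ∈ Finset.Icc (1:ℕ+) i, w q = i := by
    have hmem : i ∈ (Finset.Icc (1:ℕ+) i).image ⇑w := by
      rw [himage i hiN.le]
      exact Finset.mem_Icc.mpr ⟨i.one_le, le_refl _⟩
    simpa [Finset.mem_image] using hmem
  obtain ⟨q, hq1, hq2⟩ := hqex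
  have hqi : q ≠ i := fun h => hi (h ▸ hq2)
  have hqlt : q < i := lt_of_le_of_ne (Finset.mem_Icc.mp hq1).2 hqi
  have hqk : k < q := by
    by_contra hqk
    push_neg at hqk
    have := hup q hqk
    rw [hq2] at this
    exact absurd this (not_le.mpr hiN)
  have hwq := hw2 q i hqk hqlt
  rw [hq2] at hwq
  exact absurd hwi_le (not_le.mpr hwq)

end IzetaProof

/-- Theorem 3.1.5 of [BS97a]. For `ζ ≠ 1`, with
`k = |up(ζ)|` and `w` listing `up(ζ)` increasingly on positions `1,…,k` and
the complement increasingly afterwards, one has `ζ⁻¹w ≤ₖ w`; in particular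
`[ζ⁻¹w, w]ₖ ≠ ∅` and `ζ = w·(ζ⁻¹w)⁻¹`. -/
theorem Izeta (ζ : Sinf) (hζ : FinSupp ζ) (hne : ζ ≠ 1)
    (k : ℕ+) (hk : {j : ℕ+ | ζ⁻¹ j < j}.ncard = (k : ℕ))
    (w : Sinf)
    (hw1 : ∀ i j : ℕ+, i < j → j ≤ k → w i < w j)
    (hw2 : ∀ i j : ℕ+, k < i → i < j → w i < w j)
    (hw3 : ∀ i : ℕ+, i ≤ k → ζ⁻¹ (w i) < w i)
    (hw4 : ∀ i : ℕ+, k < i → ¬(ζ⁻¹ (w i) < w i)) :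
    kBruhat k (ζ⁻¹ * w) w ∧ ζ = w * (ζ⁻¹ * w)⁻¹ := by
  refine ⟨?_, ?_⟩
  · have hwfin : FinSupp w := w_finSupp ζ hζ k w hw2 hw3
    have hufin : FinSupp (ζ⁻¹ * w) := finSupp_mul (finSupp_inv hζ) hwfin
    exact chain_lemma k w hw1 hw2
      (∑ i ∈ Finset.Icc (1:ℕ+) k, ((w i : ℕ) - ((ζ⁻¹ * w) i : ℕ)))
      (ζ⁻¹ * w) hufin
      (fun i hik => (hw3 i hik).le)
      (fun i hik => not_lt.mp (hw4 i hik))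
      le_rfl
  · group
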